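/- arXiv:1711.10633 — 2 statements merged into one kernel-verified Lean document; each statement's English description precedes it below -/
import Mathlib

section
/- Let T ≥ 1, let X_1,…,X_T and Y_1,…,Y_T be finite nonempty types, let two (general) scenario trees be given by conditional probabilities p_t and q_t, and let d : X×Y → ℝ≥0 be a cost on path pairs. Then the dynamic-programming value at the roots equals the nested distance LP value: D_0(root, root) = ND, where ND is the minimum of the flat linear program over transport plans on path pairs subject to the successor-form conditional marginal constraints. -/
open scoped NNReal Classical
open Finset

noncomputable section

/-- A full path of a `T`-stage scenario tree with stage types `X 0, …, X (T-1)`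
(0-indexed: index `t` corresponds to stage `t+1` of the paper). -/
abbrev NDPath (X : ℕ → Type) (T : ℕ) := ∀ t : Fin T, X t.1

/-- A stage-`t` prefix (the history of the first `t` stages); `t = 0` is the root. -/
abbrev NDPre (X : ℕ → Type) (t : ℕ) := ∀ τ : Fin t, X τ.1

/-- The path `i` extends the stage-`t` prefix `k`. -/
def NDExtends {X : ℕ → Type} {T t : ℕ} (i : NDPath X T) (k : NDPre X t) : Prop :=
  ∀ (τ : Fin t) (h : τ.1 < T), i ⟨τ.1, h⟩ = k τ

/-- The subtree weight `π_{k,l}` of a transport plan `π` on path pairs: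
the total mass of `π` on path pairs extending the prefix pair `(k, l)`. -/
def NDsubw {X Y : ℕ → Type} {T : ℕ} [∀ n, Fintype (X n)] [∀ n, Fintype (Y n)]
    (π : NDPath X T → NDPath Y T → ℝ≥0) (t : ℕ) (k : NDPre X t) (l : NDPre Y t) : ℝ≥0 :=
  ∑ i : NDPath X T, ∑ j : NDPath Y T,
    if NDExtends i k ∧ NDExtends j l then π i j else 0

/-- The nested distance LP value: minimum of `∑ π(i,j) d(i,j)` over transport plans of
total mass one satisfying the successor-form conditional marginal constraints. -/
def NDval {X Y : ℕ → Type} (T : ℕ) [∀ n, Fintype (X n)] [∀ n, Fintype (Y n)]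
    (p : ∀ t, NDPre X t → X t → ℝ≥0) (q : ∀ t, NDPre Y t → Y t → ℝ≥0)
    (d : NDPath X T → NDPath Y T → ℝ≥0) : ℝ≥0 :=
  sInf { v | ∃ π : NDPath X T → NDPath Y T → ℝ≥0,
    (∑ i, ∑ j, π i j) = 1 ∧
    (∀ t, t < T → ∀ (k : NDPre X t) (l : NDPre Y t) (x : X t) (y : Y t),
      (∑ y' : Y t, NDsubw π (t+1) (Fin.snoc k x) (Fin.snoc l y'))
          = p t k x * NDsubw π t k l ∧
      (∑ x' : X t, NDsubw π (t+1) (Fin.snoc k x') (Fin.snoc l y))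
          = q t l y * NDsubw π t k l) ∧
    v = ∑ i, ∑ j, π i j * d i j }

/-- The sub-tree distance `D_t(k,l)`, defined by backward recursion: at `t = T` it is the
path cost, and for `t < T` it is the optimal value of the stage-`t` transport subproblem. -/
def NDsub {X Y : ℕ → Type} (T : ℕ) [∀ n, Fintype (X n)] [∀ n, Fintype (Y n)]
    (p : ∀ t, NDPre X t → X t → ℝ≥0) (q : ∀ t, NDPre Y t → Y t → ℝ≥0)
    (d : NDPath X T → NDPath Y T → ℝ≥0)
    (t : ℕ) (k : NDPre X t) (l : NDPre Y t) : ℝ≥0 :=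
  if h : t < T then
    sInf { v | ∃ π : X t → Y t → ℝ≥0,
      (∀ x, ∑ y, π x y = p t k x) ∧ (∀ y, ∑ x, π x y = q t l y) ∧
      v = ∑ x, ∑ y, π x y * NDsub T p q d (t+1) (Fin.snoc k x) (Fin.snoc l y) }
  else
    d (fun τ => k ⟨τ.1, lt_of_lt_of_le τ.2 (not_lt.mp h)⟩)
      (fun τ => l ⟨τ.1, lt_of_lt_of_le τ.2 (not_lt.mp h)⟩)
  termination_by T - t
  decreasing_by omega

/-- The dynamic-programming value function `Φ_t(k,l,m)` with mass argument `m`. -/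
def NDPhi {X Y : ℕ → Type} (T : ℕ) [∀ n, Fintype (X n)] [∀ n, Fintype (Y n)]
    (p : ∀ t, NDPre X t → X t → ℝ≥0) (q : ∀ t, NDPre Y t → Y t → ℝ≥0)
    (d : NDPath X T → NDPath Y T → ℝ≥0)
    (t : ℕ) (k : NDPre X t) (l : NDPre Y t) (m : ℝ≥0) : ℝ≥0 :=
  if h : t < T then
    sInf { v | ∃ π : X t → Y t → ℝ≥0,
      (∀ x, ∑ y, π x y = p t k x * m) ∧ (∀ y, ∑ x, π x y = q t l y * m) ∧
      v = ∑ x, ∑ y, NDPhi T p q d (t+1) (Fin.snoc k x) (Fin.snoc l y) (π x y) }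
  else
    m * d (fun τ => k ⟨τ.1, lt_of_lt_of_le τ.2 (not_lt.mp h)⟩)
          (fun τ => l ⟨τ.1, lt_of_lt_of_le τ.2 (not_lt.mp h)⟩)
  termination_by T - t
  decreasing_by omega

/-- The Wasserstein (optimal transport) value between two probability vectors for a cost `c`. -/
def dW {A B : Type*} [Fintype A] [Fintype B]
    (P : A → ℝ≥0) (Q : B → ℝ≥0) (c : A → B → ℝ≥0) : ℝ≥0 :=
  sInf { v | ∃ π : A → B → ℝ≥0,
    (∀ a, ∑ b, π a b = P a) ∧ (∀ b, ∑ a, π a b = Q b) ∧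
    v = ∑ a, ∑ b, π a b * c a b }

/-- The conditional probability `P(i ∣ k)` of the path `i` given its stage-`t` prefix:
the product of the conditional probabilities of the steps of `i` after stage `t`.
With `t = 0` this is the (unconditional) path probability `P(i)`. -/
def NDcondP {X : ℕ → Type} {T : ℕ} (p : ∀ t, NDPre X t → X t → ℝ≥0)
    (t : ℕ) (i : NDPath X T) : ℝ≥0 :=
  ∏ τ ∈ Finset.Ico t T,
    if h : τ < T then p τ (fun s => i ⟨s.1, lt_trans s.2 h⟩) (i ⟨τ, h⟩) else 1

end
noncomputable section Aux

lemma ndextends_zero {X : ℕ → Type} {T : ℕ} (i : NDPath X T) (k : NDPre X 0) :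
    NDExtends i k := fun τ _ => τ.elim0

lemma ndextends_top {X : ℕ → Type} {T : ℕ} (i : NDPath X T) (k : NDPre X T) :
    NDExtends i k ↔ i = k := by
  constructor
  · intro h; funext τ; exact h τ τ.2
  · rintro rfl τ h; rfl

lemma ndextends_snoc {X : ℕ → Type} {T t : ℕ} (ht : t < T) (i : NDPath X T)
    (k : NDPre X t) (x : X t) :
    NDExtends i (Fin.snoc k x) ↔ NDExtends i k ∧ i ⟨t, ht⟩ = x := by
  constructor
  · intro h
    refine ⟨fun τ hτ => ?_, ?_⟩
    · have h1 := h τ.castSucc hτ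
      rwa [Fin.snoc_castSucc] at h1
    · have h2 := h (Fin.last t) ht
      rwa [Fin.snoc_last] at h2
  · rintro ⟨h1, h2⟩ ⟨s, hs⟩ hτ
    rcases Nat.lt_or_ge s t with hst | hst
    · have he : (⟨s, hs⟩ : Fin (t+1)) = Fin.castSucc ⟨s, hst⟩ := rfl
      exact (h1 ⟨s, hst⟩ hτ).trans (Fin.snoc_castSucc (α := fun τ : Fin (t+1) => X τ.1) x k ⟨s, hst⟩).symm
    · have hseq : s = t := by omega
      subst hseq
      have he : (⟨s, hs⟩ : Fin (s+1)) = Fin.last s := rfl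
      exact h2.trans (Fin.snoc_last (α := fun τ : Fin (s+1) => X τ.1) x k).symm

lemma sum_ext_top {X Y : ℕ → Type} {T : ℕ} [∀ n, Fintype (X n)] [∀ n, Fintype (Y n)]
    (f : NDPath X T → NDPath Y T → ℝ≥0) (k : NDPre X T) (l : NDPre Y T) :
    (∑ i, ∑ j, if NDExtends i k ∧ NDExtends j l then f i j else 0) = f k l := by
  rw [Finset.sum_eq_single k]
  · rw [Finset.sum_eq_single l]
    · simp [ndextends_top]
    · intro j _ hj; simp [ndextends_top, hj]
    · simp
  · intro i _ hi; simp [ndextends_top, hi]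
  · simp

lemma sum_ext_snoc_term {X Y : ℕ → Type} {T t : ℕ} [∀ n, Fintype (X n)] [∀ n, Fintype (Y n)]
    (ht : t < T) (i : NDPath X T) (j : NDPath Y T) (k : NDPre X t) (l : NDPre Y t) (c : ℝ≥0) :
    (∑ x : X t, ∑ y : Y t,
        if NDExtends i (Fin.snoc k x) ∧ NDExtends j (Fin.snoc l y) then c else 0)
      = if NDExtends i k ∧ NDExtends j l then c else 0 := by
  simp only [ndextends_snoc ht]
  by_cases hA : NDExtends i k <;> by_cases hB : NDExtends j l <;>
    simp [hA, hB, ite_and, Finset.sum_ite_eq]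

lemma sum_ext_snoc {X Y : ℕ → Type} {T t : ℕ} [∀ n, Fintype (X n)] [∀ n, Fintype (Y n)]
    (ht : t < T) (f : NDPath X T → NDPath Y T → ℝ≥0)
    (k : NDPre X t) (l : NDPre Y t) :
    (∑ i, ∑ j, if NDExtends i k ∧ NDExtends j l then f i j else 0)
      = ∑ x : X t, ∑ y : Y t, ∑ i, ∑ j,
          if NDExtends i (Fin.snoc k x) ∧ NDExtends j (Fin.snoc l y) then f i j else 0 := by
  have h1 : ∀ i j, (if NDExtends i k ∧ NDExtends j l then f i j else 0)
      = ∑ x : X t, ∑ y : Y t,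
          if NDExtends i (Fin.snoc k x) ∧ NDExtends j (Fin.snoc l y) then f i j else 0 :=
    fun i j => (sum_ext_snoc_term ht i j k l (f i j)).symm
  simp_rw [h1]
  calc (∑ i : NDPath X T, ∑ j : NDPath Y T, ∑ x : X t, ∑ y : Y t,
          if NDExtends i (Fin.snoc k x) ∧ NDExtends j (Fin.snoc l y) then f i j else 0)
      = ∑ i : NDPath X T, ∑ x : X t, ∑ j : NDPath Y T, ∑ y : Y t,
          if NDExtends i (Fin.snoc k x) ∧ NDExtends j (Fin.snoc l y) then f i j else 0 :=
        Finset.sum_congr rfl (fun i _ => Finset.sum_comm)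
    _ = ∑ x : X t, ∑ i : NDPath X T, ∑ j : NDPath Y T, ∑ y : Y t,
          if NDExtends i (Fin.snoc k x) ∧ NDExtends j (Fin.snoc l y) then f i j else 0 :=
        Finset.sum_comm
    _ = ∑ x : X t, ∑ i : NDPath X T, ∑ y : Y t, ∑ j : NDPath Y T,
          if NDExtends i (Fin.snoc k x) ∧ NDExtends j (Fin.snoc l y) then f i j else 0 :=
        Finset.sum_congr rfl (fun x _ => Finset.sum_congr rfl (fun i _ => Finset.sum_comm))
    _ = ∑ x : X t, ∑ y : Y t, ∑ i : NDPath X T, ∑ j : NDPath Y T,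
          if NDExtends i (Fin.snoc k x) ∧ NDExtends j (Fin.snoc l y) then f i j else 0 :=
        Finset.sum_congr rfl (fun x _ => Finset.sum_comm)

end Aux
noncomputable section Constr

variable {X Y : ℕ → Type}

/-- One near-optimal stage transport with mass `m`, chosen by choice. -/
noncomputable def chooseStep (T : ℕ) [∀ n, Fintype (X n)] [∀ n, Fintype (Y n)]
    (p : ∀ t, NDPre X t → X t → ℝ≥0) (q : ∀ t, NDPre Y t → Y t → ℝ≥0)
    (d : NDPath X T → NDPath Y T → ℝ≥0) (ε : ℝ≥0)
    (t : ℕ) (k : NDPre X t) (l : NDPre Y t) (m : ℝ≥0) : X t → Y t → ℝ≥0 :=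
  if h : ∃ σ : X t → Y t → ℝ≥0,
      (∀ x, ∑ y, σ x y = p t k x * m) ∧ (∀ y, ∑ x, σ x y = q t l y * m) ∧
      (∑ x, ∑ y, σ x y * NDsub T p q d (t+1) (Fin.snoc k x) (Fin.snoc l y))
        ≤ m * NDsub T p q d t k l + m * ε
  then h.choose else fun _ _ => 0

lemma chooseStep_spec (T : ℕ) [∀ n, Fintype (X n)] [∀ n, Fintype (Y n)]
    (p : ∀ t, NDPre X t → X t → ℝ≥0) (q : ∀ t, NDPre Y t → Y t → ℝ≥0)
    (d : NDPath X T → NDPath Y T → ℝ≥0) (ε : ℝ≥0) (hε : 0 < ε)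
    {t : ℕ} (ht : t < T)
    (hp : ∀ k : NDPre X t, ∑ x, p t k x = 1) (hq : ∀ l : NDPre Y t, ∑ y, q t l y = 1)
    (k : NDPre X t) (l : NDPre Y t) (m : ℝ≥0) :
    (∀ x, ∑ y, chooseStep T p q d ε t k l m x y = p t k x * m) ∧
    (∀ y, ∑ x, chooseStep T p q d ε t k l m x y = q t l y * m) ∧
    (∑ x, ∑ y, chooseStep T p q d ε t k l m x y
        * NDsub T p q d (t+1) (Fin.snoc k x) (Fin.snoc l y))
      ≤ m * NDsub T p q d t k l + m * ε := by
  have hex : ∃ σ : X t → Y t → ℝ≥0,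
      (∀ x, ∑ y, σ x y = p t k x * m) ∧ (∀ y, ∑ x, σ x y = q t l y * m) ∧
      (∑ x, ∑ y, σ x y * NDsub T p q d (t+1) (Fin.snoc k x) (Fin.snoc l y))
        ≤ m * NDsub T p q d t k l + m * ε := by
    -- the defining set of `NDsub` at `t` is nonempty
    set S := { v | ∃ σ : X t → Y t → ℝ≥0,
      (∀ x, ∑ y, σ x y = p t k x) ∧ (∀ y, ∑ x, σ x y = q t l y) ∧
      v = ∑ x, ∑ y, σ x y * NDsub T p q d (t+1) (Fin.snoc k x) (Fin.snoc l y) } with hS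
    have hDS : NDsub T p q d t k l = sInf S := by rw [NDsub, dif_pos ht]
    have hne : S.Nonempty := by
      refine ⟨_, fun x y => p t k x * q t l y, fun x => ?_, fun y => ?_, rfl⟩
      · rw [← Finset.mul_sum, hq l, mul_one]
      · rw [← Finset.sum_mul, hp k, one_mul]
    have hlt : sInf S < sInf S + ε := lt_add_of_pos_right _ hε
    obtain ⟨v, hvS, hv⟩ := exists_lt_of_csInf_lt hne hlt
    obtain ⟨σ0, hσ1, hσ2, rfl⟩ := hvS
    refine ⟨fun x y => m * σ0 x y, fun x => ?_, fun y => ?_, ?_⟩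
    · rw [← Finset.mul_sum, hσ1 x, mul_comm]
    · rw [← Finset.mul_sum, hσ2 y, mul_comm]
    · calc (∑ x, ∑ y, m * σ0 x y * NDsub T p q d (t+1) (Fin.snoc k x) (Fin.snoc l y))
          = m * ∑ x, ∑ y, σ0 x y * NDsub T p q d (t+1) (Fin.snoc k x) (Fin.snoc l y) := by
            rw [Finset.mul_sum]; exact Finset.sum_congr rfl fun x _ => by
              rw [Finset.mul_sum]; exact Finset.sum_congr rfl fun y _ => by ring
        _ ≤ m * (sInf S + ε) := mul_le_mul_right hv.le m
        _ = m * NDsub T p q d t k l + m * ε := by rw [hDS, mul_add]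
  rw [chooseStep, dif_pos hex]
  exact hex.choose_spec

/-- The recursively constructed family of subtree masses. -/
noncomputable def muFun (T : ℕ) [∀ n, Fintype (X n)] [∀ n, Fintype (Y n)]
    (p : ∀ t, NDPre X t → X t → ℝ≥0) (q : ∀ t, NDPre Y t → Y t → ℝ≥0)
    (d : NDPath X T → NDPath Y T → ℝ≥0) (ε : ℝ≥0) :
    (t : ℕ) → NDPre X t → NDPre Y t → ℝ≥0
  | 0, _, _ => 1
  | (t+1), k, l =>
      chooseStep T p q d ε t (Fin.init k) (Fin.init l)
        (muFun T p q d ε t (Fin.init k) (Fin.init l)) (k (Fin.last t)) (l (Fin.last t))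

lemma muFun_snoc (T : ℕ) [∀ n, Fintype (X n)] [∀ n, Fintype (Y n)]
    (p : ∀ t, NDPre X t → X t → ℝ≥0) (q : ∀ t, NDPre Y t → Y t → ℝ≥0)
    (d : NDPath X T → NDPath Y T → ℝ≥0) (ε : ℝ≥0) (t : ℕ)
    (k : NDPre X t) (l : NDPre Y t) (x : X t) (y : Y t) :
    muFun T p q d ε (t+1) (Fin.snoc k x) (Fin.snoc l y)
      = chooseStep T p q d ε t k l (muFun T p q d ε t k l) x y := by
  simp [muFun, Fin.init_snoc, Fin.snoc_last]

end Constr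
noncomputable section Aux2

lemma NDsubw_def {X Y : ℕ → Type} {T : ℕ} [∀ n, Fintype (X n)] [∀ n, Fintype (Y n)]
    (π : NDPath X T → NDPath Y T → ℝ≥0) (t : ℕ) (k : NDPre X t) (l : NDPre Y t) :
    NDsubw π t k l
      = ∑ i : NDPath X T, ∑ j : NDPath Y T,
          if NDExtends i k ∧ NDExtends j l then π i j else 0 := rfl

lemma NDsub_top {X Y : ℕ → Type} {T : ℕ} [∀ n, Fintype (X n)] [∀ n, Fintype (Y n)]
    (p : ∀ t, NDPre X t → X t → ℝ≥0) (q : ∀ t, NDPre Y t → Y t → ℝ≥0)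
    (d : NDPath X T → NDPath Y T → ℝ≥0) (k : NDPre X T) (l : NDPre Y T) :
    NDsub T p q d T k l = d k l := by
  rw [NDsub, dif_neg (lt_irrefl T)]

end Aux2
/-- The dynamic-programming value at the pair of roots equals the
nested distance LP value. -/
theorem subtreeDistance_root_eq_NDval
    (T : ℕ) (hT : 1 ≤ T) (X Y : ℕ → Type)
    [∀ n, Fintype (X n)] [∀ n, Nonempty (X n)]
    [∀ n, Fintype (Y n)] [∀ n, Nonempty (Y n)]
    (p : ∀ t, NDPre X t → X t → ℝ≥0) (q : ∀ t, NDPre Y t → Y t → ℝ≥0)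
    (hp : ∀ t, t < T → ∀ k, ∑ x, p t k x = 1)
    (hq : ∀ t, t < T → ∀ l, ∑ y, q t l y = 1)
    (d : NDPath X T → NDPath Y T → ℝ≥0) :
    NDsub T p q d 0 (fun τ => (Nat.not_lt_zero _ τ.2).elim) (fun τ => (Nat.not_lt_zero _ τ.2).elim)
      = NDval T p q d := by
  classical
  set rX : NDPre X 0 := fun τ => (Nat.not_lt_zero _ τ.2).elim with hrX
  set rY : NDPre Y 0 := fun τ => (Nat.not_lt_zero _ τ.2).elim with hrY
  -- Part 1: for every ε > 0 an LP-feasible plan whose value is within T·ε of the DP value.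
  have key : ∀ ε : ℝ≥0, 0 < ε → ∃ π' : NDPath X T → NDPath Y T → ℝ≥0,
      ((∑ i, ∑ j, π' i j) = 1 ∧
       (∀ t, t < T → ∀ (k : NDPre X t) (l : NDPre Y t) (x : X t) (y : Y t),
         (∑ y' : Y t, NDsubw π' (t+1) (Fin.snoc k x) (Fin.snoc l y'))
             = p t k x * NDsubw π' t k l ∧
         (∑ x' : X t, NDsubw π' (t+1) (Fin.snoc k x') (Fin.snoc l y))
             = q t l y * NDsubw π' t k l)) ∧
      (∑ i, ∑ j, π' i j * d i j) ≤ NDsub T p q d 0 rX rY + T * ε := by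
    intro ε hε
    have spec : ∀ {t : ℕ} (ht : t < T) (k : NDPre X t) (l : NDPre Y t),
        (∀ x, ∑ y, chooseStep T p q d ε t k l (muFun T p q d ε t k l) x y
            = p t k x * muFun T p q d ε t k l) ∧
        (∀ y, ∑ x, chooseStep T p q d ε t k l (muFun T p q d ε t k l) x y
            = q t l y * muFun T p q d ε t k l) ∧
        (∑ x, ∑ y, chooseStep T p q d ε t k l (muFun T p q d ε t k l) x y
            * NDsub T p q d (t+1) (Fin.snoc k x) (Fin.snoc l y))
          ≤ muFun T p q d ε t k l * NDsub T p q d t k l + muFun T p q d ε t k l * ε :=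
      fun {t} ht k l => chooseStep_spec T p q d ε hε ht (hp t ht) (hq t ht) k l _
    -- total mass of each stage-transport
    have hCS : ∀ {t : ℕ} (ht : t < T) (k : NDPre X t) (l : NDPre Y t),
        (∑ x, ∑ y, chooseStep T p q d ε t k l (muFun T p q d ε t k l) x y)
          = muFun T p q d ε t k l := by
      intro t ht k l
      have h1 : (∑ x, ∑ y, chooseStep T p q d ε t k l (muFun T p q d ε t k l) x y)
          = ∑ x, p t k x * muFun T p q d ε t k l :=
        Finset.sum_congr rfl fun x _ => (spec ht k l).1 x
      rw [h1, ← Finset.sum_mul, hp t ht k, one_mul]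
    -- subtree weights of the constructed plan agree with the constructed masses
    have hG : ∀ n t, t + n = T → ∀ (k : NDPre X t) (l : NDPre Y t),
        NDsubw (muFun T p q d ε T) t k l = muFun T p q d ε t k l := by
      intro n
      induction n with
      | zero =>
        intro t htn k l
        have hteq : t = T := by omega
        subst hteq
        rw [NDsubw_def, sum_ext_top]
      | succ n ih =>
        intro t htn k l
        have ht : t < T := by omega
        rw [NDsubw_def, sum_ext_snoc ht]
        have hterm : ∀ (x : X t) (y : Y t),
            (∑ i, ∑ j, if NDExtends i (Fin.snoc k x) ∧ NDExtends j (Fin.snoc l y)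
                then muFun T p q d ε T i j else 0)
              = chooseStep T p q d ε t k l (muFun T p q d ε t k l) x y := by
          intro x y
          have hi := ih (t+1) (by omega) (Fin.snoc k x) (Fin.snoc l y)
          rw [NDsubw_def] at hi
          rw [hi, muFun_snoc]
        calc (∑ x, ∑ y, ∑ i, ∑ j,
                if NDExtends i (Fin.snoc k x) ∧ NDExtends j (Fin.snoc l y)
                  then muFun T p q d ε T i j else 0)
            = ∑ x, ∑ y, chooseStep T p q d ε t k l (muFun T p q d ε t k l) x y :=
              Finset.sum_congr rfl fun x _ => Finset.sum_congr rfl fun y _ => hterm x y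
          _ = muFun T p q d ε t k l := hCS ht k l
    -- LP feasibility
    have hmass : (∑ i, ∑ j, muFun T p q d ε T i j) = 1 := by
      have h0 := hG T 0 (by omega) rX rY
      rw [NDsubw_def] at h0
      have h1 : (∑ i, ∑ j, if NDExtends i rX ∧ NDExtends j rY
          then muFun T p q d ε T i j else 0) = ∑ i, ∑ j, muFun T p q d ε T i j :=
        Finset.sum_congr rfl fun i _ => Finset.sum_congr rfl fun j _ => by
          rw [if_pos ⟨ndextends_zero i rX, ndextends_zero j rY⟩]
      rw [h1] at h0
      exact h0
    have hcon : ∀ t, t < T → ∀ (k : NDPre X t) (l : NDPre Y t) (x : X t) (y : Y t),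
        (∑ y' : Y t, NDsubw (muFun T p q d ε T) (t+1) (Fin.snoc k x) (Fin.snoc l y'))
            = p t k x * NDsubw (muFun T p q d ε T) t k l ∧
        (∑ x' : X t, NDsubw (muFun T p q d ε T) (t+1) (Fin.snoc k x') (Fin.snoc l y))
            = q t l y * NDsubw (muFun T p q d ε T) t k l := by
      intro t ht k l x y
      have hup : ∀ (x : X t) (y : Y t),
          NDsubw (muFun T p q d ε T) (t+1) (Fin.snoc k x) (Fin.snoc l y)
            = chooseStep T p q d ε t k l (muFun T p q d ε t k l) x y := by
        intro x y
        rw [hG (T - (t+1)) (t+1) (by omega), muFun_snoc]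
      have hlow : NDsubw (muFun T p q d ε T) t k l = muFun T p q d ε t k l :=
        hG (T - t) t (by omega) k l
      constructor
      · calc (∑ y' : Y t, NDsubw (muFun T p q d ε T) (t+1) (Fin.snoc k x) (Fin.snoc l y'))
            = ∑ y' : Y t, chooseStep T p q d ε t k l (muFun T p q d ε t k l) x y' :=
              Finset.sum_congr rfl fun y' _ => hup x y'
          _ = p t k x * muFun T p q d ε t k l := (spec ht k l).1 x
          _ = p t k x * NDsubw (muFun T p q d ε T) t k l := by rw [hlow]
      · calc (∑ x' : X t, NDsubw (muFun T p q d ε T) (t+1) (Fin.snoc k x') (Fin.snoc l y))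
            = ∑ x' : X t, chooseStep T p q d ε t k l (muFun T p q d ε t k l) x' y :=
              Finset.sum_congr rfl fun x' _ => hup x' y
          _ = q t l y * muFun T p q d ε t k l := (spec ht k l).2.1 y
          _ = q t l y * NDsubw (muFun T p q d ε T) t k l := by rw [hlow]
    -- objective bound
    have hJ : ∀ n t, t + n = T → ∀ (k : NDPre X t) (l : NDPre Y t),
        (∑ i, ∑ j, if NDExtends i k ∧ NDExtends j l then muFun T p q d ε T i j * d i j else 0)
          ≤ muFun T p q d ε t k l * NDsub T p q d t k l
            + muFun T p q d ε t k l * n * ε := by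
      intro n
      induction n with
      | zero =>
        intro t htn k l
        have hteq : t = T := by omega
        subst hteq
        rw [sum_ext_top, NDsub_top]
        simp
      | succ n ih =>
        intro t htn k l
        have ht : t < T := by omega
        rw [sum_ext_snoc ht (fun i j => muFun T p q d ε T i j * d i j) k l]
        have hsplit : ∀ (x : X t) (y : Y t),
            muFun T p q d ε (t+1) (Fin.snoc k x) (Fin.snoc l y)
                * NDsub T p q d (t+1) (Fin.snoc k x) (Fin.snoc l y)
              + muFun T p q d ε (t+1) (Fin.snoc k x) (Fin.snoc l y) * n * ε
            = chooseStep T p q d ε t k l (muFun T p q d ε t k l) x y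
                * NDsub T p q d (t+1) (Fin.snoc k x) (Fin.snoc l y)
              + chooseStep T p q d ε t k l (muFun T p q d ε t k l) x y * ((n : ℝ≥0) * ε) := by
          intro x y
          rw [muFun_snoc]
          ring
        calc (∑ x, ∑ y, ∑ i, ∑ j,
                if NDExtends i (Fin.snoc k x) ∧ NDExtends j (Fin.snoc l y)
                  then muFun T p q d ε T i j * d i j else 0)
            ≤ ∑ x, ∑ y,
                (muFun T p q d ε (t+1) (Fin.snoc k x) (Fin.snoc l y)
                    * NDsub T p q d (t+1) (Fin.snoc k x) (Fin.snoc l y)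
                  + muFun T p q d ε (t+1) (Fin.snoc k x) (Fin.snoc l y) * n * ε) :=
              Finset.sum_le_sum fun x _ => Finset.sum_le_sum fun y _ =>
                ih (t+1) (by omega) (Fin.snoc k x) (Fin.snoc l y)
          _ = (∑ x, ∑ y, chooseStep T p q d ε t k l (muFun T p q d ε t k l) x y
                    * NDsub T p q d (t+1) (Fin.snoc k x) (Fin.snoc l y))
              + (∑ x, ∑ y, chooseStep T p q d ε t k l (muFun T p q d ε t k l) x y)
                  * ((n : ℝ≥0) * ε) := by
              rw [Finset.sum_mul]
              rw [← Finset.sum_add_distrib]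
              refine Finset.sum_congr rfl fun x _ => ?_
              rw [Finset.sum_mul, ← Finset.sum_add_distrib]
              exact Finset.sum_congr rfl fun y _ => hsplit x y
          _ ≤ (muFun T p q d ε t k l * NDsub T p q d t k l + muFun T p q d ε t k l * ε)
              + muFun T p q d ε t k l * ((n : ℝ≥0) * ε) := by
              rw [hCS ht k l]
              exact add_le_add_left (spec ht k l).2.2 _
          _ = muFun T p q d ε t k l * NDsub T p q d t k l
              + muFun T p q d ε t k l * ((n : ℕ) + 1 : ℝ≥0) * ε := by
              push_cast
              ring
          _ = muFun T p q d ε t k l * NDsub T p q d t k l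
              + muFun T p q d ε t k l * ((n + 1 : ℕ) : ℝ≥0) * ε := by
              push_cast
              ring
    refine ⟨muFun T p q d ε T, ⟨hmass, hcon⟩, ?_⟩
    have hJ0 := hJ T 0 (by omega) rX rY
    have h1 : (∑ i, ∑ j, if NDExtends i rX ∧ NDExtends j rY
        then muFun T p q d ε T i j * d i j else 0)
          = ∑ i, ∑ j, muFun T p q d ε T i j * d i j :=
      Finset.sum_congr rfl fun i _ => Finset.sum_congr rfl fun j _ => by
        rw [if_pos ⟨ndextends_zero i rX, ndextends_zero j rY⟩]
    rw [h1] at hJ0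
    have h2 : muFun T p q d ε 0 rX rY = 1 := rfl
    rw [h2, one_mul, one_mul] at hJ0
    exact hJ0
  -- nonemptiness of the LP feasible set
  obtain ⟨π1, hfeas1, _⟩ := key 1 one_pos
  refine le_antisymm ?_ ?_
  · -- DP value is a lower bound for the LP
    rw [NDval]
    refine le_csInf ⟨_, π1, hfeas1.1, hfeas1.2, rfl⟩ ?_
    rintro v ⟨π', hm, hc, rfl⟩
    have LB : ∀ n t, t + n = T → ∀ (k : NDPre X t) (l : NDPre Y t),
        NDsubw π' t k l * NDsub T p q d t k l
          ≤ ∑ i, ∑ j, if NDExtends i k ∧ NDExtends j l then π' i j * d i j else 0 := by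
      intro n
      induction n with
      | zero =>
        intro t htn k l
        have hteq : t = T := by omega
        subst hteq
        rw [NDsubw_def, sum_ext_top, sum_ext_top, NDsub_top]
      | succ n ih =>
        intro t htn k l
        have ht : t < T := by omega
        by_cases hm0 : NDsubw π' t k l = 0
        · rw [hm0, zero_mul]
          exact zero_le
        · have h1 : ∀ x : X t,
              (∑ y : Y t, NDsubw π' (t+1) (Fin.snoc k x) (Fin.snoc l y) / NDsubw π' t k l)
                = p t k x := by
            intro x
            have hcx := (hc t ht k l x (Classical.arbitrary _)).1
            rw [← Finset.sum_div, hcx, mul_div_cancel_right₀ _ hm0]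
          have h2 : ∀ y : Y t,
              (∑ x : X t, NDsubw π' (t+1) (Fin.snoc k x) (Fin.snoc l y) / NDsubw π' t k l)
                = q t l y := by
            intro y
            have hcy := (hc t ht k l (Classical.arbitrary _) y).2
            rw [← Finset.sum_div, hcy, mul_div_cancel_right₀ _ hm0]
          have hDle : NDsub T p q d t k l
              ≤ ∑ x : X t, ∑ y : Y t, (NDsubw π' (t+1) (Fin.snoc k x) (Fin.snoc l y) / NDsubw π' t k l)
                  * NDsub T p q d (t+1) (Fin.snoc k x) (Fin.snoc l y) := by
            rw [NDsub, dif_pos ht]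
            exact csInf_le (OrderBot.bddBelow _) ⟨_, h1, h2, rfl⟩
          calc NDsubw π' t k l * NDsub T p q d t k l
              ≤ NDsubw π' t k l
                  * ∑ x : X t, ∑ y : Y t, (NDsubw π' (t+1) (Fin.snoc k x) (Fin.snoc l y) / NDsubw π' t k l)
                      * NDsub T p q d (t+1) (Fin.snoc k x) (Fin.snoc l y) :=
                mul_le_mul_right hDle _
            _ = ∑ x : X t, ∑ y : Y t, NDsubw π' (t+1) (Fin.snoc k x) (Fin.snoc l y)
                  * NDsub T p q d (t+1) (Fin.snoc k x) (Fin.snoc l y) := by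
                rw [Finset.mul_sum]
                refine Finset.sum_congr rfl fun x _ => ?_
                rw [Finset.mul_sum]
                refine Finset.sum_congr rfl fun y _ => ?_
                rw [← mul_assoc, mul_comm (NDsubw π' t k l), div_mul_cancel₀ _ hm0]
            _ ≤ ∑ x : X t, ∑ y : Y t, ∑ i, ∑ j,
                  if NDExtends i (Fin.snoc k x) ∧ NDExtends j (Fin.snoc l y)
                    then π' i j * d i j else 0 :=
                Finset.sum_le_sum fun x _ => Finset.sum_le_sum fun y _ =>
                  ih (t+1) (by omega) (Fin.snoc k x) (Fin.snoc l y)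
            _ = ∑ i, ∑ j, if NDExtends i k ∧ NDExtends j l then π' i j * d i j else 0 :=
                (sum_ext_snoc ht (fun i j => π' i j * d i j) k l).symm
    have hLB0 := LB T 0 (by omega) rX rY
    have hm0 : NDsubw π' 0 rX rY = 1 := by
      rw [NDsubw_def]
      have h1 : (∑ i, ∑ j, if NDExtends i rX ∧ NDExtends j rY then π' i j else 0)
          = ∑ i, ∑ j, π' i j :=
        Finset.sum_congr rfl fun i _ => Finset.sum_congr rfl fun j _ => by
          rw [if_pos ⟨ndextends_zero i rX, ndextends_zero j rY⟩]
      rw [h1, hm]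
    rw [hm0, one_mul] at hLB0
    have h1 : (∑ i, ∑ j, if NDExtends i rX ∧ NDExtends j rY then π' i j * d i j else 0)
        = ∑ i, ∑ j, π' i j * d i j :=
      Finset.sum_congr rfl fun i _ => Finset.sum_congr rfl fun j _ => by
        rw [if_pos ⟨ndextends_zero i rX, ndextends_zero j rY⟩]
    rw [h1] at hLB0
    exact hLB0
  · -- LP value ≤ DP value: use the ε-optimal constructed plans
    refine le_of_forall_pos_le_add fun ε hε => ?_
    have hTpos : (0 : ℝ≥0) < (T : ℝ≥0) := by
      have : (0:ℕ) < T := by omega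
      exact_mod_cast this
    obtain ⟨π', hfeas, hval⟩ := key (ε / T) (div_pos hε hTpos)
    have hmem : NDval T p q d ≤ ∑ i, ∑ j, π' i j * d i j := by
      rw [NDval]
      exact csInf_le (OrderBot.bddBelow _) ⟨π', hfeas.1, hfeas.2, rfl⟩
    refine hmem.trans (hval.trans ?_)
    have : (T : ℝ≥0) * (ε / T) = ε := by
      rw [mul_comm, div_mul_cancel₀ _ (ne_of_gt hTpos)]
    rw [this]
end

section
/- Let T ≥ 1, let X_1,…,X_T and Y_1,…,Y_T be finite nonempty types, let two (general) scenario trees be given by conditional probabilities p_t and q_t, and let d : X×Y → ℝ≥0 be a cost on path pairs. Fix 0 ≤ t ≤ T and a stage-t prefix pair (k,l). Then the sub-tree distance D_t(k,l) equals the nested distance LP value computed for the modified trees A(k) and B(l), where A(k) has conditional probabilities p'_τ equal to the point mass at k_τ for stages τ ≤ t and equal to p_τ for stages τ > t (and B(l) is defined analogously from q and l), with the same path cost d. -/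
open scoped NNReal Classical
open Finset

set_option linter.unusedSectionVars false
set_option maxHeartbeats 1000000

section Aux

variable {X Y : ℕ → Type} {T : ℕ} [∀ n, Fintype (X n)] [∀ n, Fintype (Y n)]

/-- Restriction of a prefix to an earlier stage. -/
def NDres {X : ℕ → Type} {t : ℕ} (k : NDPre X t) (s : ℕ) (h : s ≤ t) : NDPre X s :=
  fun τ => k ⟨τ.1, lt_of_lt_of_le τ.2 h⟩

lemma NDres_self {t : ℕ} (k : NDPre X t) : NDres k t le_rfl = k := rfl

lemma snoc_eval_lt {t : ℕ} (k : NDPre X t) (x : X t) (s : ℕ) (hs : s < t) :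
    (Fin.snoc k x : NDPre X (t+1)) ⟨s, Nat.lt_succ_of_lt hs⟩ = k ⟨s, hs⟩ :=
  Fin.snoc_castSucc (α := fun τ : Fin (t+1) => X τ.1) (p := k) (x := x) (i := ⟨s, hs⟩)

lemma snoc_eval_last {t : ℕ} (k : NDPre X t) (x : X t) :
    (Fin.snoc k x : NDPre X (t+1)) ⟨t, Nat.lt_succ_self t⟩ = x :=
  Fin.snoc_last (α := fun τ : Fin (t+1) => X τ.1) (p := k) (x := x)

lemma NDres_snoc {t : ℕ} (k : NDPre X t) (x : X t) (s : ℕ) (h : s ≤ t) :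
    NDres (Fin.snoc k x : NDPre X (t+1)) s (le_trans h (Nat.le_succ t)) = NDres k s h := by
  funext τ
  exact snoc_eval_lt k x τ.1 (lt_of_lt_of_le τ.2 h)

lemma NDres_snoc_top {t : ℕ} (k : NDPre X t) (x : X t) :
    NDres (Fin.snoc k x : NDPre X (t+1)) t (Nat.le_succ t) = k :=
  NDres_snoc k x t le_rfl

lemma snoc_res_succ {t s : ℕ} (k : NDPre X t) (h : s < t) :
    (Fin.snoc (NDres k s h.le) (k ⟨s, h⟩) : NDPre X (s+1)) = NDres k (s+1) h := by
  funext τ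
  rcases Nat.lt_or_ge τ.1 s with hτ | hτ
  · have e : (Fin.snoc (NDres k s h.le) (k ⟨s, h⟩) : NDPre X (s+1)) ⟨τ.1, Nat.lt_succ_of_lt hτ⟩
        = NDres k s h.le ⟨τ.1, hτ⟩ := snoc_eval_lt _ _ τ.1 hτ
    exact e
  · have hτs : τ.1 = s := by omega
    have e : (Fin.snoc (NDres k s h.le) (k ⟨s, h⟩) : NDPre X (s+1)) ⟨s, Nat.lt_succ_self s⟩
        = k ⟨s, h⟩ := snoc_eval_last _ _
    have eτ : τ = (⟨s, Nat.lt_succ_self s⟩ : Fin (s+1)) := by ext; exact hτs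
    rw [eτ]
    exact e

lemma NDExtends_snoc_iff {t : ℕ} (htT : t < T) (i : NDPath X T) (k : NDPre X t) (x : X t) :
    NDExtends i (Fin.snoc k x : NDPre X (t+1)) ↔ NDExtends i k ∧ i ⟨t, htT⟩ = x := by
  constructor
  · intro h
    refine ⟨fun τ hτ => ?_, ?_⟩
    · have e := h ⟨τ.1, Nat.lt_succ_of_lt τ.2⟩ hτ
      rw [snoc_eval_lt k x τ.1 τ.2] at e
      exact e
    · have e := h ⟨t, Nat.lt_succ_self t⟩ htT
      rwa [snoc_eval_last] at e
  · rintro ⟨h1, h2⟩ τ hτ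
    rcases Nat.lt_or_ge τ.1 t with hτt | hτt
    · have e : (Fin.snoc k x : NDPre X (t+1)) ⟨τ.1, Nat.lt_succ_of_lt hτt⟩ = k ⟨τ.1, hτt⟩ :=
        snoc_eval_lt k x τ.1 hτt
      have e2 : (Fin.snoc k x : NDPre X (t+1)) τ = k ⟨τ.1, hτt⟩ := e
      rw [e2]
      exact h1 ⟨τ.1, hτt⟩ hτ
    · have hτs : τ.1 = t := by omega
      have eτ : τ = (⟨t, Nat.lt_succ_self t⟩ : Fin (t+1)) := by ext; exact hτs
      subst eτ
      rw [snoc_eval_last]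
      exact h2

lemma NDExtends_top (i : NDPath X T) (k : NDPre X T) : NDExtends i k ↔ i = k := by
  constructor
  · intro h; funext τ; exact h τ τ.2
  · rintro rfl τ hτ; rfl

lemma NDExtends_root (i : NDPath X T) (k : NDPre X 0) : NDExtends i k := by
  intro τ; exact τ.elim0

lemma sum_swap4 {A B C D : Type*} [Fintype A] [Fintype B] [Fintype C] [Fintype D]
    (f : A → B → C → D → ℝ≥0) :
    ∑ a, ∑ b, ∑ c, ∑ e, f a b c e = ∑ c, ∑ e, ∑ a, ∑ b, f a b c e := by
  calc ∑ a, ∑ b, ∑ c, ∑ e, f a b c e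
      = ∑ a, ∑ c, ∑ b, ∑ e, f a b c e := Finset.sum_congr rfl fun a _ => Finset.sum_comm
    _ = ∑ c, ∑ a, ∑ b, ∑ e, f a b c e := Finset.sum_comm
    _ = ∑ c, ∑ a, ∑ e, ∑ b, f a b c e := Finset.sum_congr rfl fun c _ =>
          Finset.sum_congr rfl fun a _ => Finset.sum_comm
    _ = ∑ c, ∑ e, ∑ a, ∑ b, f a b c e := Finset.sum_congr rfl fun c _ => Finset.sum_comm

lemma NDsubw_top (π : NDPath X T → NDPath Y T → ℝ≥0) (k : NDPre X T) (l : NDPre Y T) :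
    NDsubw π T k l = π k l := by
  simp [NDsubw, NDExtends_top, ite_and, Finset.sum_ite_eq]

lemma NDsubw_root (π : NDPath X T → NDPath Y T → ℝ≥0) (k : NDPre X 0) (l : NDPre Y 0) :
    NDsubw π 0 k l = ∑ i, ∑ j, π i j := by
  simp [NDsubw, NDExtends_root]

lemma NDsubw_succ {t : ℕ} (htT : t < T) (π : NDPath X T → NDPath Y T → ℝ≥0)
    (k : NDPre X t) (l : NDPre Y t) :
    NDsubw π t k l = ∑ x, ∑ y, NDsubw π (t+1) (Fin.snoc k x) (Fin.snoc l y) := by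
  simp only [NDsubw]
  rw [sum_swap4 (f := fun x y i j =>
    if NDExtends i (Fin.snoc k x) ∧ NDExtends j (Fin.snoc l y) then π i j else 0)]
  refine Finset.sum_congr rfl fun i _ => Finset.sum_congr rfl fun j _ => ?_
  have hc : ∀ x y, (NDExtends i (Fin.snoc k x) ∧ NDExtends j (Fin.snoc l y)) ↔
      ((NDExtends i k ∧ NDExtends j l) ∧ (i ⟨t, htT⟩ = x ∧ j ⟨t, htT⟩ = y)) := by
    intro x y
    rw [NDExtends_snoc_iff htT, NDExtends_snoc_iff htT]
    tauto
  simp only [hc]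
  by_cases hP : NDExtends i k ∧ NDExtends j l
  · simp [hP, ite_and, Finset.sum_ite_eq]
  · simp [hP]

lemma ot_scale {A B : Type*} [Fintype A] [Fintype B]
    (P : A → ℝ≥0) (Q : B → ℝ≥0) (c : A → B → ℝ≥0) (m : ℝ≥0)
    (ρ : A → B → ℝ≥0) (h1 : ∀ a, ∑ b, ρ a b = P a * m) (h2 : ∀ b, ∑ a, ρ a b = Q b * m) :
    sInf { v | ∃ π : A → B → ℝ≥0,
      (∀ a, ∑ b, π a b = P a) ∧ (∀ b, ∑ a, π a b = Q b) ∧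
      v = ∑ a, ∑ b, π a b * c a b } * m ≤ ∑ a, ∑ b, ρ a b * c a b := by
  rcases eq_or_ne m 0 with rfl | hm
  · simp
  · set π : A → B → ℝ≥0 := fun a b => ρ a b / m with hπ
    have hmem : (∑ a, ∑ b, π a b * c a b) ∈ { v | ∃ π : A → B → ℝ≥0,
        (∀ a, ∑ b, π a b = P a) ∧ (∀ b, ∑ a, π a b = Q b) ∧
        v = ∑ a, ∑ b, π a b * c a b } := by
      refine ⟨π, fun a => ?_, fun b => ?_, rfl⟩
      · rw [hπ]
        simp only
        rw [← Finset.sum_div, h1, mul_div_cancel_right₀ _ hm]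
      · rw [hπ]
        simp only
        rw [← Finset.sum_div, h2, mul_div_cancel_right₀ _ hm]
    have hle := csInf_le (OrderBot.bddBelow _) hmem
    calc sInf _ * m ≤ (∑ a, ∑ b, π a b * c a b) * m := mul_le_mul_left hle m
      _ = ∑ a, ∑ b, ρ a b * c a b := by
          rw [Finset.sum_mul]
          refine Finset.sum_congr rfl fun a _ => ?_
          rw [Finset.sum_mul]
          refine Finset.sum_congr rfl fun b _ => ?_
          rw [hπ]
          simp only
          rw [mul_right_comm, div_mul_cancel₀ _ hm]

lemma ot_dirac {A B : Type*} [Fintype A] [Fintype B] (a0 : A) (b0 : B) (c : A → B → ℝ≥0) :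
    sInf { v | ∃ π : A → B → ℝ≥0,
      (∀ a, ∑ b, π a b = if a = a0 then 1 else 0) ∧
      (∀ b, ∑ a, π a b = if b = b0 then 1 else 0) ∧
      v = ∑ a, ∑ b, π a b * c a b } = c a0 b0 := by
  have hset : { v | ∃ π : A → B → ℝ≥0,
      (∀ a, ∑ b, π a b = if a = a0 then 1 else 0) ∧
      (∀ b, ∑ a, π a b = if b = b0 then 1 else 0) ∧
      v = ∑ a, ∑ b, π a b * c a b } = {c a0 b0} := by
    ext v
    constructor
    · rintro ⟨π, hr, hc', rfl⟩
      have hz : ∀ a b, a ≠ a0 ∨ b ≠ b0 → π a b = 0 := by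
        intro a b hab
        rcases hab with ha | hb
        · have := hr a
          rw [if_neg ha] at this
          exact (Finset.sum_eq_zero_iff.mp this) b (Finset.mem_univ b)
        · have := hc' b
          rw [if_neg hb] at this
          exact (Finset.sum_eq_zero_iff.mp this) a (Finset.mem_univ a)
      have hone : π a0 b0 = 1 := by
        have := hr a0
        rw [if_pos rfl] at this
        rw [← this]
        symm
        apply Finset.sum_eq_single b0
        · intro b _ hb
          exact hz a0 b (Or.inr hb)
        · intro h; exact absurd (Finset.mem_univ b0) h
      have : ∑ a, ∑ b, π a b * c a b = π a0 b0 * c a0 b0 := by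
        rw [Finset.sum_eq_single a0
          (fun a _ ha => Finset.sum_eq_zero fun b _ => by rw [hz a b (Or.inl ha), zero_mul])
          (fun h => absurd (Finset.mem_univ a0) h)]
        exact Finset.sum_eq_single b0
          (fun b _ hb => by rw [hz a0 b (Or.inr hb), zero_mul])
          (fun h => absurd (Finset.mem_univ b0) h)
      rw [this, hone, one_mul]
      rfl
    · rintro rfl
      refine ⟨fun a b => if a = a0 ∧ b = b0 then 1 else 0, fun a => ?_, fun b => ?_, ?_⟩
      · simp [ite_and, Finset.sum_ite_eq']
      · simp [ite_and, Finset.sum_ite_eq']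
      · simp [ite_and, Finset.sum_ite_eq']
  rw [hset, csInf_singleton]

end Aux

section Aux2

variable {X Y : ℕ → Type} {T : ℕ} [∀ n, Fintype (X n)] [∀ n, Fintype (Y n)]
variable [∀ n, Nonempty (X n)] [∀ n, Nonempty (Y n)]
variable {p : ∀ t, NDPre X t → X t → ℝ≥0} {q : ∀ t, NDPre Y t → Y t → ℝ≥0}
variable {d : NDPath X T → NDPath Y T → ℝ≥0}

lemma NDsub_of_lt {t : ℕ} (htT : t < T) (k : NDPre X t) (l : NDPre Y t) :
    NDsub T p q d t k l = sInf { v | ∃ π : X t → Y t → ℝ≥0,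
      (∀ x, ∑ y, π x y = p t k x) ∧ (∀ y, ∑ x, π x y = q t l y) ∧
      v = ∑ x, ∑ y, π x y * NDsub T p q d (t+1) (Fin.snoc k x) (Fin.snoc l y) } := by
  rw [NDsub]
  rw [dif_pos htT]

lemma NDsub_of_top (k : NDPre X T) (l : NDPre Y T) :
    NDsub T p q d T k l = d k l := by
  rw [NDsub]
  rw [dif_neg (lt_irrefl T)]

/-- The product transport plan built from a family of one-stage plans `γ`. -/
def NDprodPlan {X Y : ℕ → Type} {T : ℕ}
    (γ : ∀ s, s < T → NDPre X s → NDPre Y s → X s → Y s → ℝ≥0) :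
    ∀ t, t ≤ T → NDPre X t → NDPre Y t → ℝ≥0
  | 0, _, _, _ => 1
  | t+1, ht, k, l =>
      NDprodPlan γ t (le_trans (Nat.le_succ t) ht)
          (NDres k t (Nat.le_succ t)) (NDres l t (Nat.le_succ t))
        * γ t (lt_of_lt_of_le (Nat.lt_succ_self t) ht)
          (NDres k t (Nat.le_succ t)) (NDres l t (Nat.le_succ t))
          (k ⟨t, Nat.lt_succ_self t⟩) (l ⟨t, Nat.lt_succ_self t⟩)

lemma NDprodPlan_snoc {γ : ∀ s, s < T → NDPre X s → NDPre Y s → X s → Y s → ℝ≥0}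
    {t : ℕ} (ht : t < T) (k : NDPre X t) (l : NDPre Y t) (x : X t) (y : Y t) :
    NDprodPlan γ (t+1) ht (Fin.snoc k x) (Fin.snoc l y)
      = NDprodPlan γ t ht.le k l * γ t ht k l x y := by
  show NDprodPlan γ t _ (NDres (Fin.snoc k x) t (Nat.le_succ t)) _
        * γ t _ (NDres (Fin.snoc k x) t (Nat.le_succ t)) _
          ((Fin.snoc k x : NDPre X (t+1)) ⟨t, Nat.lt_succ_self t⟩)
          ((Fin.snoc l y : NDPre Y (t+1)) ⟨t, Nat.lt_succ_self t⟩) = _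
  rw [NDres_snoc_top, NDres_snoc_top, snoc_eval_last, snoc_eval_last]

/-- Product formula for the subtree weights of the product plan. -/
lemma NDsubw_prodPlan {γ : ∀ s, s < T → NDPre X s → NDPre Y s → X s → Y s → ℝ≥0}
    (hγ : ∀ s (h : s < T) a b, ∑ x, ∑ y, γ s h a b x y = 1) :
    ∀ n t, T ≤ t + n → ∀ (ht : t ≤ T) (k : NDPre X t) (l : NDPre Y t),
      NDsubw (fun i j => NDprodPlan γ T le_rfl i j) t k l = NDprodPlan γ t ht k l := by
  intro n
  induction n with
  | zero =>
    intro t hn ht k l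
    have : t = T := le_antisymm ht (by omega)
    subst this
    exact NDsubw_top _ k l
  | succ n ih =>
    intro t hn ht k l
    rcases eq_or_lt_of_le ht with rfl | htT
    · exact NDsubw_top _ k l
    · rw [NDsubw_succ htT]
      calc ∑ x, ∑ y, NDsubw (fun i j => NDprodPlan γ T le_rfl i j) (t+1)
              (Fin.snoc k x) (Fin.snoc l y)
          = ∑ x, ∑ y, NDprodPlan γ (t+1) htT (Fin.snoc k x) (Fin.snoc l y) :=
            Finset.sum_congr rfl fun x _ => Finset.sum_congr rfl fun y _ =>
              ih (t+1) (by omega) htT _ _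
        _ = ∑ x, ∑ y, NDprodPlan γ t ht k l * γ t htT k l x y :=
            Finset.sum_congr rfl fun x _ => Finset.sum_congr rfl fun y _ => by
              rw [NDprodPlan_snoc htT]
        _ = NDprodPlan γ t ht k l := by
            simp_rw [← Finset.mul_sum]
            rw [show (∑ x, ∑ y, γ t htT k l x y) = 1 from hγ t htT k l, mul_one]
            
/-- Direction A: any feasible plan for the LP dominates the sub-tree distance. -/
lemma NDsub_mul_le (π : NDPath X T → NDPath Y T → ℝ≥0)
    (hfeas : ∀ t, t < T → ∀ (k : NDPre X t) (l : NDPre Y t) (x : X t) (y : Y t),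
      (∑ y' : Y t, NDsubw π (t+1) (Fin.snoc k x) (Fin.snoc l y'))
          = p t k x * NDsubw π t k l ∧
      (∑ x' : X t, NDsubw π (t+1) (Fin.snoc k x') (Fin.snoc l y))
          = q t l y * NDsubw π t k l) :
    ∀ n t, T ≤ t + n → t ≤ T → ∀ (k : NDPre X t) (l : NDPre Y t),
      NDsub T p q d t k l * NDsubw π t k l
        ≤ NDsubw (fun i j => π i j * d i j) t k l := by
  intro n
  induction n with
  | zero =>
    intro t hn ht k l
    have : t = T := le_antisymm ht (by omega)
    subst this
    rw [NDsub_of_top, NDsubw_top, NDsubw_top]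
    exact le_of_eq (mul_comm _ _)
  | succ n ih =>
    intro t hn ht k l
    rcases eq_or_lt_of_le ht with rfl | htT
    · rw [NDsub_of_top, NDsubw_top, NDsubw_top]
      exact le_of_eq (mul_comm _ _)
    · rw [NDsub_of_lt htT]
      have step := ot_scale (p t k) (q t l)
        (fun x y => NDsub T p q d (t+1) (Fin.snoc k x) (Fin.snoc l y))
        (NDsubw π t k l)
        (fun x y => NDsubw π (t+1) (Fin.snoc k x) (Fin.snoc l y))
        (fun x => (hfeas t htT k l x (Classical.arbitrary _)).1)
        (fun y => (hfeas t htT k l (Classical.arbitrary _) y).2)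
      refine le_trans step ?_
      rw [NDsubw_succ htT (fun i j => π i j * d i j) k l]
      refine Finset.sum_le_sum fun x _ => Finset.sum_le_sum fun y _ => ?_
      rw [mul_comm]
      exact ih (t+1) (by omega) htT _ _

end Aux2

section Aux3

variable {X Y : ℕ → Type} {T : ℕ} [∀ n, Fintype (X n)] [∀ n, Fintype (Y n)]
variable [∀ n, Nonempty (X n)] [∀ n, Nonempty (Y n)]
variable {p : ∀ t, NDPre X t → X t → ℝ≥0} {q : ∀ t, NDPre Y t → Y t → ℝ≥0}
variable {d : NDPath X T → NDPath Y T → ℝ≥0}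

lemma NDsub_of_ge {s : ℕ} (h : ¬ s < T) (a : NDPre X s) (b : NDPre Y s) :
    NDsub T p q d s a b
      = d (fun τ => a ⟨τ.1, lt_of_lt_of_le τ.2 (le_of_not_gt h)⟩)
          (fun τ => b ⟨τ.1, lt_of_lt_of_le τ.2 (le_of_not_gt h)⟩) := by
  rw [NDsub]
  rw [dif_neg h]

lemma nnreal_le_of_forall_pos_le_add {a b : ℝ≥0} (h : ∀ δ : ℝ≥0, 0 < δ → a ≤ b + δ) :
    a ≤ b := by
  by_contra hab
  push_neg at hab
  have hδ : 0 < a - b := tsub_pos_of_lt hab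
  have h1 := h ((a - b)/2) (by positivity)
  have h2 : b + (a - b)/2 < b + (a - b) :=
    (add_lt_add_iff_left b).mpr (NNReal.half_lt_self hδ.ne')
  have h3 : b + (a - b) = a := by rw [add_comm, tsub_add_cancel_of_le hab.le]
  rw [h3] at h2
  exact absurd (lt_of_le_of_lt h1 h2) (lt_irrefl a)

/-- Cost bound for the product plan built from `ε`-optimal one-stage plans. -/
lemma NDcost_bound {γ : ∀ s, s < T → NDPre X s → NDPre Y s → X s → Y s → ℝ≥0} (ε : ℝ≥0)
    (hγsum : ∀ s (h : s < T) a b, ∑ x, ∑ y, γ s h a b x y = 1)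
    (hγopt : ∀ s (h : s < T) a b,
      ∑ x, ∑ y, γ s h a b x y * NDsub T p q d (s+1) (Fin.snoc a x) (Fin.snoc b y)
        ≤ NDsub T p q d s a b + ε) :
    ∀ n t, T ≤ t + n → ∀ (ht : t ≤ T) (k : NDPre X t) (l : NDPre Y t),
      NDsubw (fun i j => NDprodPlan γ T le_rfl i j * d i j) t k l
        ≤ (NDsub T p q d t k l + ε * ((T - t : ℕ) : ℝ≥0)) * NDprodPlan γ t ht k l := by
  intro n
  induction n with
  | zero =>
    intro t hn ht k l
    have : t = T := le_antisymm ht (by omega)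
    subst this
    rw [NDsubw_top, NDsub_of_top, Nat.sub_self]
    simp [mul_comm]
  | succ n ih =>
    intro t hn ht k l
    rcases eq_or_lt_of_le ht with rfl | htT
    · rw [NDsubw_top, NDsub_of_top, Nat.sub_self]
      simp [mul_comm]
    · rw [NDsubw_succ htT]
      have hcast : ε * ((T - t : ℕ) : ℝ≥0) = ε * ((T - (t+1) : ℕ) : ℝ≥0) + ε := by
        have h' : (T - t : ℕ) = (T - (t+1)) + 1 := by omega
        rw [h', Nat.cast_add, Nat.cast_one, mul_add, mul_one]
      calc ∑ x, ∑ y, NDsubw (fun i j => NDprodPlan γ T le_rfl i j * d i j) (t+1)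
              (Fin.snoc k x) (Fin.snoc l y)
          ≤ ∑ x, ∑ y, (NDsub T p q d (t+1) (Fin.snoc k x) (Fin.snoc l y)
                + ε * ((T - (t+1) : ℕ) : ℝ≥0))
              * NDprodPlan γ (t+1) htT (Fin.snoc k x) (Fin.snoc l y) :=
            Finset.sum_le_sum fun x _ => Finset.sum_le_sum fun y _ =>
              ih (t+1) (by omega) htT _ _
        _ = NDprodPlan γ t ht k l * ∑ x, ∑ y,
              (NDsub T p q d (t+1) (Fin.snoc k x) (Fin.snoc l y)
                + ε * ((T - (t+1) : ℕ) : ℝ≥0)) * γ t htT k l x y := by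
            simp_rw [NDprodPlan_snoc htT, Finset.mul_sum]
            exact Finset.sum_congr rfl fun x _ => Finset.sum_congr rfl fun y _ => by ring
        _ ≤ NDprodPlan γ t ht k l
              * ((NDsub T p q d t k l + ε) + ε * ((T - (t+1) : ℕ) : ℝ≥0)) := by
            refine mul_le_mul_right ?_ _
            have hsplit : ∑ x, ∑ y,
                (NDsub T p q d (t+1) (Fin.snoc k x) (Fin.snoc l y)
                  + ε * ((T - (t+1) : ℕ) : ℝ≥0)) * γ t htT k l x y
              = (∑ x, ∑ y, γ t htT k l x y
                    * NDsub T p q d (t+1) (Fin.snoc k x) (Fin.snoc l y))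
                + ε * ((T - (t+1) : ℕ) : ℝ≥0) * ∑ x, ∑ y, γ t htT k l x y := by
              rw [Finset.mul_sum]
              rw [← Finset.sum_add_distrib]
              refine Finset.sum_congr rfl fun x _ => ?_
              rw [Finset.mul_sum, ← Finset.sum_add_distrib]
              exact Finset.sum_congr rfl fun y _ => by ring
            rw [hsplit, hγsum t htT k l, mul_one]
            exact add_le_add_left (hγopt t htT k l) _
        _ = (NDsub T p q d t k l + ε * ((T - t : ℕ) : ℝ≥0)) * NDprodPlan γ t ht k l := by
            rw [hcast]
            ring

/-- The core identity: the nested distance LP value equals the root sub-tree distance. -/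
lemma NDval_eq_NDsub_root
    (hp : ∀ s, s < T → ∀ a, ∑ x, p s a x = 1)
    (hq : ∀ s, s < T → ∀ b, ∑ y, q s b y = 1) :
    NDval T p q d = NDsub T p q d 0 (fun τ => τ.elim0) (fun τ => τ.elim0) := by
  -- existence of ε-optimal one-stage plans
  have hex : ∀ (ε : ℝ≥0), 0 < ε → ∀ s (h : s < T) (a : NDPre X s) (b : NDPre Y s),
      ∃ γ : X s → Y s → ℝ≥0, (∀ x, ∑ y, γ x y = p s a x) ∧ (∀ y, ∑ x, γ x y = q s b y) ∧
        ∑ x, ∑ y, γ x y * NDsub T p q d (s+1) (Fin.snoc a x) (Fin.snoc b y)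
          ≤ NDsub T p q d s a b + ε := by
    intro ε hε s h a b
    have hne : Set.Nonempty { v | ∃ π : X s → Y s → ℝ≥0,
        (∀ x, ∑ y, π x y = p s a x) ∧ (∀ y, ∑ x, π x y = q s b y) ∧
        v = ∑ x, ∑ y, π x y * NDsub T p q d (s+1) (Fin.snoc a x) (Fin.snoc b y) } := by
      refine ⟨_, fun x y => p s a x * q s b y, fun x => ?_, fun y => ?_, rfl⟩
      · rw [← Finset.mul_sum, hq s h b, mul_one]
      · rw [← Finset.sum_mul, hp s h a, one_mul]
    obtain ⟨v, hv, hvlt⟩ := exists_lt_of_csInf_lt hne (lt_add_of_pos_right _ hε)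
    obtain ⟨γ, hγ1, hγ2, rfl⟩ := hv
    exact ⟨γ, hγ1, hγ2, by rw [NDsub_of_lt h]; exact le_of_lt hvlt⟩
  -- construction of a near-optimal feasible plan
  have hplan : ∀ (ε : ℝ≥0), 0 < ε → ∃ π : NDPath X T → NDPath Y T → ℝ≥0,
      ((∑ i, ∑ j, π i j) = 1 ∧
      (∀ s, s < T → ∀ (k : NDPre X s) (l : NDPre Y s) (x : X s) (y : Y s),
        (∑ y' : Y s, NDsubw π (s+1) (Fin.snoc k x) (Fin.snoc l y'))
            = p s k x * NDsubw π s k l ∧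
        (∑ x' : X s, NDsubw π (s+1) (Fin.snoc k x') (Fin.snoc l y))
            = q s l y * NDsubw π s k l)) ∧
      (∑ i, ∑ j, π i j * d i j)
        ≤ NDsub T p q d 0 (fun τ => τ.elim0) (fun τ => τ.elim0) + ε * (T : ℝ≥0) := by
    intro ε hε
    set γ : ∀ s, s < T → NDPre X s → NDPre Y s → X s → Y s → ℝ≥0 :=
      fun s h a b => (hex ε hε s h a b).choose with hγdef
    have hγ1 : ∀ s (h : s < T) a b x, ∑ y, γ s h a b x y = p s a x :=
      fun s h a b => (hex ε hε s h a b).choose_spec.1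
    have hγ2 : ∀ s (h : s < T) a b y, ∑ x, γ s h a b x y = q s b y :=
      fun s h a b => (hex ε hε s h a b).choose_spec.2.1
    have hγopt : ∀ s (h : s < T) a b,
        ∑ x, ∑ y, γ s h a b x y * NDsub T p q d (s+1) (Fin.snoc a x) (Fin.snoc b y)
          ≤ NDsub T p q d s a b + ε :=
      fun s h a b => (hex ε hε s h a b).choose_spec.2.2
    have hγsum : ∀ s (h : s < T) a b, ∑ x, ∑ y, γ s h a b x y = 1 := by
      intro s h a b
      calc ∑ x, ∑ y, γ s h a b x y = ∑ x, p s a x :=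
            Finset.sum_congr rfl fun x _ => hγ1 s h a b x
        _ = 1 := hp s h a
    set π : NDPath X T → NDPath Y T → ℝ≥0 := fun i j => NDprodPlan γ T le_rfl i j with hπdef
    have hw : ∀ (t : ℕ) (ht : t ≤ T) (k : NDPre X t) (l : NDPre Y t),
        NDsubw π t k l = NDprodPlan γ t ht k l :=
      fun t ht k l => NDsubw_prodPlan hγsum T t (by omega) ht k l
    refine ⟨π, ⟨?_, ?_⟩, ?_⟩
    · have := hw 0 (by omega) (fun τ => τ.elim0) (fun τ => τ.elim0)
      rw [NDsubw_root] at this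
      rw [this]
      rfl
    · intro s hs k l x y
      constructor
      · calc ∑ y', NDsubw π (s+1) (Fin.snoc k x) (Fin.snoc l y')
            = ∑ y', NDprodPlan γ (s+1) hs (Fin.snoc k x) (Fin.snoc l y') :=
              Finset.sum_congr rfl fun y' _ => hw (s+1) hs _ _
          _ = ∑ y', NDprodPlan γ s hs.le k l * γ s hs k l x y' :=
              Finset.sum_congr rfl fun y' _ => NDprodPlan_snoc hs k l x y'
          _ = NDprodPlan γ s hs.le k l * ∑ y', γ s hs k l x y' := by
              rw [Finset.mul_sum]
          _ = p s k x * NDsubw π s k l := by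
              rw [hγ1 s hs k l x, hw s hs.le k l, mul_comm]
      · calc ∑ x', NDsubw π (s+1) (Fin.snoc k x') (Fin.snoc l y)
            = ∑ x', NDprodPlan γ (s+1) hs (Fin.snoc k x') (Fin.snoc l y) :=
              Finset.sum_congr rfl fun x' _ => hw (s+1) hs _ _
          _ = ∑ x', NDprodPlan γ s hs.le k l * γ s hs k l x' y :=
              Finset.sum_congr rfl fun x' _ => NDprodPlan_snoc hs k l x' y
          _ = NDprodPlan γ s hs.le k l * ∑ x', γ s hs k l x' y := by
              rw [Finset.mul_sum]
          _ = q s l y * NDsubw π s k l := by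
              rw [hγ2 s hs k l y, hw s hs.le k l, mul_comm]
    · have hcb := NDcost_bound (p := p) (q := q) (d := d) ε hγsum hγopt T 0 (by omega)
        (by omega) (fun τ => τ.elim0) (fun τ => τ.elim0)
      have hroot : NDsubw (fun i j => π i j * d i j) 0
          (fun τ => τ.elim0) (fun τ => τ.elim0) = ∑ i, ∑ j, π i j * d i j :=
        NDsubw_root _ _ _
      rw [← hroot]
      refine le_trans hcb ?_
      have h1 : NDprodPlan γ 0 (by omega : (0:ℕ) ≤ T)
          (fun τ => τ.elim0) (fun τ => τ.elim0) = 1 := rfl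
      rw [h1, mul_one, Nat.sub_zero]
  -- the two inequalities
  apply le_antisymm
  · apply nnreal_le_of_forall_pos_le_add
    intro δ hδ
    set c : ℝ≥0 := ((T + 1 : ℕ) : ℝ≥0) with hc
    have hcpos : 0 < c := by positivity
    set ε : ℝ≥0 := δ / c with hε
    have hεpos : 0 < ε := div_pos hδ hcpos
    obtain ⟨π, hfeas, hcost⟩ := hplan ε hεpos
    have hmem : (∑ i, ∑ j, π i j * d i j) ∈ { v | ∃ π : NDPath X T → NDPath Y T → ℝ≥0,
        (∑ i, ∑ j, π i j) = 1 ∧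
        (∀ s, s < T → ∀ (k : NDPre X s) (l : NDPre Y s) (x : X s) (y : Y s),
          (∑ y' : Y s, NDsubw π (s+1) (Fin.snoc k x) (Fin.snoc l y'))
              = p s k x * NDsubw π s k l ∧
          (∑ x' : X s, NDsubw π (s+1) (Fin.snoc k x') (Fin.snoc l y))
              = q s l y * NDsubw π s k l) ∧
        v = ∑ i, ∑ j, π i j * d i j } := ⟨π, hfeas.1, hfeas.2, rfl⟩
    refine le_trans (csInf_le (OrderBot.bddBelow _) hmem) (le_trans hcost ?_)
    refine add_le_add le_rfl ?_
    calc ε * (T : ℝ≥0) ≤ ε * c := by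
          refine mul_le_mul_right ?_ _
          rw [hc]
          exact_mod_cast Nat.cast_le.mpr (Nat.le_succ T)
      _ = δ := by rw [hε, div_mul_cancel₀ _ hcpos.ne']
  · obtain ⟨π0, hfeas0, _⟩ := hplan 1 one_pos
    refine le_csInf ⟨_, π0, hfeas0.1, hfeas0.2, rfl⟩ ?_
    rintro v ⟨π, hmass, hconstr, rfl⟩
    have := NDsub_mul_le (p := p) (q := q) (d := d) π hconstr T 0 (by omega) (by omega)
      (fun τ => τ.elim0) (fun τ => τ.elim0)
    rw [NDsubw_root, hmass, mul_one, NDsubw_root] at this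
    exact this

end Aux3

/-- The sub-tree distance `D_t(k,l)` equals the nested distance LP value of
the modified trees `A(k)` and `B(l)`, whose conditional probabilities up to stage `t` are the
point masses along the prefixes `k` and `l`, and agree with the original trees afterwards. -/
theorem subtreeDistance_eq_NDval_of_modified_trees
    (T : ℕ) (hT : 1 ≤ T) (X Y : ℕ → Type)
    [∀ n, Fintype (X n)] [∀ n, Nonempty (X n)]
    [∀ n, Fintype (Y n)] [∀ n, Nonempty (Y n)]
    (p : ∀ t, NDPre X t → X t → ℝ≥0) (q : ∀ t, NDPre Y t → Y t → ℝ≥0)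
    (hp : ∀ t, t < T → ∀ k, ∑ x, p t k x = 1)
    (hq : ∀ t, t < T → ∀ l, ∑ y, q t l y = 1)
    (d : NDPath X T → NDPath Y T → ℝ≥0)
    (t : ℕ) (ht : t ≤ T) (k : NDPre X t) (l : NDPre Y t) :
    NDsub T p q d t k l
      = NDval T
          (fun s a x => if h : s < t then (if x = k ⟨s, h⟩ then 1 else 0) else p s a x)
          (fun s b y => if h : s < t then (if y = l ⟨s, h⟩ then 1 else 0) else q s b y)
          d := by
  set p' : ∀ s, NDPre X s → X s → ℝ≥0 :=
    fun s a x => if h : s < t then (if x = k ⟨s, h⟩ then 1 else 0) else p s a x with hp'def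
  set q' : ∀ s, NDPre Y s → Y s → ℝ≥0 :=
    fun s b y => if h : s < t then (if y = l ⟨s, h⟩ then 1 else 0) else q s b y with hq'def
  have hp' : ∀ s, s < T → ∀ a, ∑ x, p' s a x = 1 := by
    intro s hs a
    by_cases h : s < t
    · simp only [hp'def, dif_pos h]
      simp
    · simp only [hp'def, dif_neg h]
      exact hp s hs a
  have hq' : ∀ s, s < T → ∀ b, ∑ y, q' s b y = 1 := by
    intro s hs b
    by_cases h : s < t
    · simp only [hq'def, dif_pos h]
      simp
    · simp only [hq'def, dif_neg h]
      exact hq s hs b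
  have hmod : ∀ n s, T ≤ s + n → t ≤ s → ∀ (a : NDPre X s) (b : NDPre Y s),
      NDsub T p' q' d s a b = NDsub T p q d s a b := by
    intro n
    induction n with
    | zero =>
      intro s hn hts a b
      rw [NDsub_of_ge (by omega), NDsub_of_ge (by omega)]
    | succ n ih =>
      intro s hn hts a b
      by_cases hsT : s < T
      · rw [NDsub_of_lt hsT, NDsub_of_lt hsT]
        have hpe : ∀ x, p' s a x = p s a x := fun x => dif_neg (by omega)
        have hqe : ∀ y, q' s b y = q s b y := fun y => dif_neg (by omega)
        have hce : ∀ x y, NDsub T p' q' d (s+1) (Fin.snoc a x) (Fin.snoc b y)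
            = NDsub T p q d (s+1) (Fin.snoc a x) (Fin.snoc b y) :=
          fun x y => ih (s+1) (by omega) (by omega) _ _
        congr 1
        ext v
        simp only [hpe, hqe, hce]
      · rw [NDsub_of_ge hsT, NDsub_of_ge hsT]
  have chain : ∀ n s (hsn : t ≤ s + n) (hst : s ≤ t),
      NDsub T p' q' d s (NDres k s hst) (NDres l s hst) = NDsub T p' q' d t k l := by
    intro n
    induction n with
    | zero =>
      intro s hsn hst
      have : s = t := by omega
      subst this
      rfl
    | succ n ih =>
      intro s hsn hst
      rcases eq_or_lt_of_le hst with rfl | hslt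
      · rfl
      · have hsT : s < T := lt_of_lt_of_le hslt ht
        rw [NDsub_of_lt hsT]
        have hpe : ∀ x : X s, p' s (NDres k s hst) x = if x = k ⟨s, hslt⟩ then 1 else 0 :=
          fun x => dif_pos hslt
        have hqe : ∀ y : Y s, q' s (NDres l s hst) y = if y = l ⟨s, hslt⟩ then 1 else 0 :=
          fun y => dif_pos hslt
        simp only [hpe, hqe]
        rw [ot_dirac (k ⟨s, hslt⟩) (l ⟨s, hslt⟩) (fun x y =>
          NDsub T p' q' d (s+1) (Fin.snoc (NDres k s hst) x) (Fin.snoc (NDres l s hst) y))]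
        rw [snoc_res_succ k hslt, snoc_res_succ l hslt]
        exact ih (s+1) (by omega) hslt
  have e1 : (NDres k 0 (by omega : (0:ℕ) ≤ t)) = (fun τ => τ.elim0 : NDPre X 0) :=
    funext fun τ => τ.elim0
  have e2 : (NDres l 0 (by omega : (0:ℕ) ≤ t)) = (fun τ => τ.elim0 : NDPre Y 0) :=
    funext fun τ => τ.elim0
  calc NDsub T p q d t k l
      = NDsub T p' q' d t k l := (hmod T t (by omega) le_rfl k l).symm
    _ = NDsub T p' q' d 0 (NDres k 0 (by omega)) (NDres l 0 (by omega)) :=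
        (chain t 0 (by omega) (by omega)).symm
    _ = NDsub T p' q' d 0 (fun τ => τ.elim0) (fun τ => τ.elim0) := by rw [e1, e2]
    _ = NDval T p' q' d := (NDval_eq_NDsub_root hp' hq').symm
end
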